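/- Let k be a field, K a purely transcendental field extension of k (generated by a set of algebraically independent elements over k), and R a k-algebra that is an integral domain. Then K ⊗_k R is an integral domain. -/

import Mathlib

open scoped TensorProduct

/-- If `K` is a purely transcendental field extension of `k` and `R` is a
`k`-algebra which is a domain, then `K ⊗_k R` is a domain. -/
theorem tensor_purely_transcendental_isDomain
    (k K : Type*) [Field k] [Field K] [Algebra k K]
    {I : Type*} (α : I → K)
    (halg : AlgebraicIndependent k α)
    (hgen : IntermediateField.adjoin k (Set.range α) = ⊤)
    (R : Type*) [CommRing R] [IsDomain R] [Algebra k R] :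
    IsDomain (K ⊗[k] R) := by
  classical
  set P := MvPolynomial I k
  set Q := MvPolynomial I R
  -- the coefficient map `P → Q`
  set φ : P →+* Q := (MvPolynomial.map (algebraMap k R)) with hφ
  have hφinj : Function.Injective φ :=
    MvPolynomial.map_injective _ (algebraMap k R).injective
  have hinj : Function.Injective (MvPolynomial.aeval α : P →ₐ[k] K) := halg
  -- the equivalence `R ⊗[k] P ≃ₐ[R] Q`
  set e₁ : R ⊗[k] P ≃ₐ[R] Q := MvPolynomial.algebraTensorAlgEquiv k R with he₁
  -- the map `R ⊗[k] P → R ⊗[k] K`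
  set g : R ⊗[k] P →ₐ[k] R ⊗[k] K :=
    Algebra.TensorProduct.map (AlgHom.id k R) (MvPolynomial.aeval α) with hg
  set ψ : Q →ₐ[k] K ⊗[k] R :=
    (((Algebra.TensorProduct.comm k R K).toAlgHom.comp g).comp
      ((e₁.symm.toAlgHom.restrictScalars k))) with hψ
  have hψ_apply : ∀ x, ψ x =
      Algebra.TensorProduct.comm k R K (g (e₁.symm x)) := fun x => rfl
  have he₁symm : ∀ p : P, e₁.symm (φ p) = 1 ⊗ₜ[k] p := by
    intro p
    rw [AlgEquiv.symm_apply_eq, he₁, MvPolynomial.algebraTensorAlgEquiv_tmul, one_smul, hφ]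
  have he₁symmC : ∀ r : R, e₁.symm (MvPolynomial.C r) = r ⊗ₜ[k] 1 := by
    intro r
    rw [AlgEquiv.symm_apply_eq, he₁, MvPolynomial.algebraTensorAlgEquiv_tmul, map_one,
      MvPolynomial.smul_eq_C_mul, mul_one]
  -- key computations
  have h1 : ∀ p : P, ψ (φ p) = (MvPolynomial.aeval α p) ⊗ₜ[k] (1 : R) := by
    intro p
    rw [hψ_apply, he₁symm]
    simp [hg]
  have h2 : ∀ r : R, ψ (MvPolynomial.C r) = (1 : K) ⊗ₜ[k] r := by
    intro r
    rw [hψ_apply, he₁symmC]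
    simp [hg]
  -- `ψ` is injective
  have hginj : Function.Injective g := by
    have : g.toLinearMap =
        LinearMap.lTensor R (MvPolynomial.aeval α : P →ₐ[k] K).toLinearMap := by
      apply TensorProduct.ext'
      intro r p
      simp [hg]
    have h := Module.Flat.lTensor_preserves_injective_linearMap
      (M := R) (MvPolynomial.aeval α : P →ₐ[k] K).toLinearMap hinj
    rw [← this] at h
    exact h
  have hψinj : Function.Injective ψ := by
    intro a b hab
    rw [hψ_apply, hψ_apply] at hab
    exact e₁.symm.injective (hginj ((Algebra.TensorProduct.comm k R K).injective hab))
  -- make `K ⊗[k] R` a `Q`-algebra via `ψ`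
  letI : Algebra Q (K ⊗[k] R) := ψ.toRingHom.toAlgebra
  have halgMap : (algebraMap Q (K ⊗[k] R) : Q → K ⊗[k] R) = ψ := rfl
  -- the submonoid of denominators
  set M : Submonoid Q := Submonoid.map φ (nonZeroDivisors P) with hM
  have hMle : M ≤ nonZeroDivisors Q := by
    rintro _ ⟨p, hp, rfl⟩
    exact mem_nonZeroDivisors_of_ne_zero
      (fun h => nonZeroDivisors.ne_zero hp (hφinj (by simpa using h)))
  have haeval_ne : ∀ p : P, p ≠ 0 → MvPolynomial.aeval α p ≠ 0 := by
    intro p hp h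
    exact hp (hinj (by simpa using h))
  haveI : IsLocalization M (K ⊗[k] R) := by
    refine ⟨⟨?_, ?_, ?_⟩⟩
    · -- map_units
      rintro ⟨_, p, hp, rfl⟩
      rw [halgMap]
      simp only [h1]
      have : (MvPolynomial.aeval α p) ⊗ₜ[k] (1 : R) =
          algebraMap K (K ⊗[k] R) (MvPolynomial.aeval α p) := rfl
      rw [this]
      exact (IsUnit.mk0 _ (haeval_ne p (nonZeroDivisors.ne_zero hp))).map _
    · -- surj
      intro z
      simp only [halgMap]
      induction z using TensorProduct.induction_on with
      | zero => exact ⟨⟨0, 1⟩, by simp⟩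
      | tmul x r =>
        have hx : x ∈ IntermediateField.adjoin k (Set.range α) := hgen ▸ trivial
        obtain ⟨r', s', hrs⟩ := (IntermediateField.mem_adjoin_range_iff k α x).mp hx
        by_cases hs : MvPolynomial.aeval α s' = 0
        · have hx0 : x = 0 := by rw [hrs, hs, div_zero]
          exact ⟨⟨0, 1⟩, by simp [hx0]⟩
        · have hs' : s' ≠ 0 := fun h => hs (by simp [h])
          refine ⟨⟨MvPolynomial.C r * φ r', ⟨φ s', ⟨s', mem_nonZeroDivisors_of_ne_zero hs', rfl⟩⟩⟩, ?_⟩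
          simp only [map_mul, h1, h2]
          rw [Algebra.TensorProduct.tmul_mul_tmul, Algebra.TensorProduct.tmul_mul_tmul]
          rw [hrs, div_mul_cancel₀ _ hs, mul_one, one_mul]
      | add z₁ z₂ ih₁ ih₂ =>
        obtain ⟨⟨q₁, m₁⟩, hq₁⟩ := ih₁
        obtain ⟨⟨q₂, m₂⟩, hq₂⟩ := ih₂
        refine ⟨⟨q₁ * m₂ + q₂ * m₁, m₁ * m₂⟩, ?_⟩
        simp only [Submonoid.coe_mul, map_mul, map_add] at hq₁ hq₂ ⊢
        calc (z₁ + z₂) * (ψ ↑m₁ * ψ ↑m₂)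
            = (z₁ * ψ ↑m₁) * ψ ↑m₂ + (z₂ * ψ ↑m₂) * ψ ↑m₁ := by ring
          _ = ψ q₁ * ψ ↑m₂ + ψ q₂ * ψ ↑m₁ := by rw [hq₁, hq₂]
    · -- exists_of_eq
      intro a b h
      have h' : ψ a = ψ b := h
      rw [hψinj h']
      exact ⟨1, rfl⟩
  exact IsLocalization.isDomain_of_le_nonZeroDivisors (K ⊗[k] R) hMle
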